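/- arXiv:1506.05721 — 2 statements merged into one kernel-verified Lean document; each statement's English description precedes it below -/
import Mathlib

section
/- (Midpoint claim.) Let δ ∈ (0,1/2]. Let j be a job with real parameters and p_j > 0, and let j* be a job with real parameters and r_{j*} < d_{j*}. If I(j*) ⊆ I(j) and I(j*) ∩ I_δ(j) ≠ ∅ (i.e., j δ-dominates j*), then the midpoint (r_{j*} + d_{j*})/2 lies in I_{δ/2}(j). -/
/-- A job with real parameters: release date `r`, deadline `d`, processing time `p`. -/
structure RJob where
  r : ℝ
  d : ℝ
  p : ℝ

/-- A real-parameter job is valid if `p ≥ 0` and `r + p ≤ d`. -/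
def RJob.valid (j : RJob) : Prop := 0 ≤ j.p ∧ j.r + j.p ≤ j.d

/-- The interval `I(j) = [r_j, d_j)` of a real-parameter job. -/
def RJob.interval (j : RJob) : Set ℝ := Set.Ico j.r j.d

/-- The laxity `ℓ_j = d_j - r_j - p_j`. -/
def RJob.lax (j : RJob) : ℝ := j.d - j.r - j.p

/-- The `δ`-interval `I_δ(j) = [r_j + δℓ_j, d_j - δℓ_j)`. -/
def RJob.deltaInterval (δ : ℝ) (j : RJob) : Set ℝ :=
  Set.Ico (j.r + δ * j.lax) (j.d - δ * j.lax)

/-- `j` δ-dominates `j*` if `I(j*) ⊆ I(j)` and `I(j*) ∩ I_δ(j) ≠ ∅`. -/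
def RJob.DeltaDominates (δ : ℝ) (j jstar : RJob) : Prop :=
  jstar.interval ⊆ j.interval ∧ (jstar.interval ∩ RJob.deltaInterval δ j).Nonempty

/-- Two real-parameter jobs are agreeable if `(r_j - r_{j'})·(d_j - d_{j'}) ≥ 0`. -/
def RAgreeable (j j' : RJob) : Prop := 0 ≤ (j.r - j'.r) * (j.d - j'.d)

/-- Two real-parameter jobs are `β`-agreeable: agreeable with intersecting `β`-intervals. -/
def RBetaAgreeable (β : ℝ) (j j' : RJob) : Prop :=
  RAgreeable j j' ∧ (RJob.deltaInterval β j ∩ RJob.deltaInterval β j').Nonempty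

/-- midpoint claim: if `j` δ-dominates `j*`, then the midpoint
`(r_{j*} + d_{j*})/2` lies in `I_{δ/2}(j)`. -/
theorem midpoint_in_half_delta_interval
    (δ : ℝ) (hδ : δ ∈ Set.Ioc (0 : ℝ) (1 / 2))
    (j : RJob) (hj : j.valid) (hpj : 0 < j.p)
    (jstar : RJob) (hjs : jstar.valid) (hstar : jstar.r < jstar.d)
    (hdom : RJob.DeltaDominates δ j jstar) :
    (jstar.r + jstar.d) / 2 ∈ RJob.deltaInterval (δ / 2) j := by
  obtain ⟨hsub, x, ⟨hx1, hx2⟩, hx3, hx4⟩ := hdom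
  have hr : j.r ≤ jstar.r ∧ jstar.d ≤ j.d := by
    have := hsub ⟨le_refl _, hstar⟩
    have h2 := (Set.Ico_subset_Ico_iff hstar).mp hsub
    exact h2
  simp only [RJob.deltaInterval, Set.mem_Ico] at *
  constructor
  · linarith [hr.1, hr.2]
  · linarith [hr.1, hr.2]
end

section
/- (Window length of β-agreeable partners.) Let β ∈ (0,1/2] and let j, j' be jobs with real parameters. If j and j' are agreeable and I_β(j) ∩ I_β(j') ≠ ∅, then d_{j'} − r_{j'} > β·ℓ_j (and symmetrically d_j − r_j > β·ℓ_{j'}). -/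
/-- window length of β-agreeable partners: if `j` and `j'` are agreeable
and their `β`-intervals intersect, then `d_{j'} - r_{j'} > β·ℓ_j` and symmetrically. -/
theorem window_length_of_beta_agreeable
    (β : ℝ) (hβ : β ∈ Set.Ioc (0 : ℝ) (1 / 2))
    (j j' : RJob) (hj : j.valid) (hj' : j'.valid)
    (hagree : RAgreeable j j')
    (hint : (RJob.deltaInterval β j ∩ RJob.deltaInterval β j').Nonempty) :
    β * j.lax < j'.d - j'.r ∧ β * j'.lax < j.d - j.r := by
  obtain ⟨x, ⟨hx1, hx2⟩, hx3, hx4⟩ := hint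
  obtain ⟨hβ0, hβ2⟩ := hβ
  obtain ⟨hp, hrd⟩ := hj
  obtain ⟨hp', hrd'⟩ := hj'
  unfold RJob.lax RAgreeable at *
  have hl : 0 ≤ j.d - j.r - j.p := by linarith
  have hl' : 0 ≤ j'.d - j'.r - j'.p := by linarith
  have hbl : 0 ≤ β * (j.d - j.r - j.p) := mul_nonneg hβ0.le hl
  have hbl' : 0 ≤ β * (j'.d - j'.r - j'.p) := mul_nonneg hβ0.le hl'
  rcases le_or_gt j.r j'.r with h | h
  · have hd : j.d ≤ j'.d ∨ j.r = j'.r := by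
      rcases eq_or_lt_of_le h with he | hlt
      · right; exact he
      · left; nlinarith
    rcases hd with hd | he
    · constructor <;> nlinarith
    · constructor <;> nlinarith
  · have hd : j'.d ≤ j.d := by nlinarith
    constructor <;> nlinarith
end
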